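/- Let {u_t} be an L₄-decomposable Bernoulli shift with rate a > 2, let ρ ∈ ℝ with |ρ| < 1, let y₀ satisfy E|y₀|⁴ < ∞, and define y_t = ρ^t y₀ + Σ_{j=0}^{t−1} ρ^j u_{t−j} (the AR(1) recursion y_t = ρ y_{t−1} + u_t) and the stationary solution ȳ_t = Σ_{j=0}^∞ ρ^j u_{t−j}. Then there are finite constants c₁, c₂ such that |y_t − ȳ_t|₄ ≤ c₁ |ρ|^t for all t ≥ 1, and the coupled version ỹ_{t,ℓ} = Σ_{j=0}^∞ ρ^j ũ_{t−j,ℓ} (built from the coupled innovations ũ_{t−j,ℓ}) satisfies |ȳ_t − ỹ_{t,ℓ}|₄ ≤ c₂ ℓ^{−a}; in particular {ȳ_t} is an L₄-decomposable Bernoulli shift with rate a. -/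

import Mathlib

open MeasureTheory ProbabilityTheory Filter Matrix Topology Asymptotics
open scoped ProbabilityTheory

noncomputable section

namespace OnlineCPD

/-- Euclidean norm on `Fin d → ℝ`. -/
def euclNorm {d : ℕ} (v : Fin d → ℝ) : ℝ := Real.sqrt (∑ j, v j ^ 2)

/-- Frobenius norm of a real matrix. -/
def frobNorm {d : ℕ} (A : Matrix (Fin d) (Fin d) ℝ) : ℝ := Real.sqrt (∑ i, ∑ j, A i j ^ 2)

variable {Ω : Type*} [MeasureSpace Ω]

/-- The `L_ν` norm `(E |X|^ν)^{1/ν}` of a real random variable. -/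
def lnorm (X : Ω → ℝ) (ν : ℝ) : ℝ := (∫ ω, |X ω| ^ ν) ^ (1 / ν)

/-- Innovation data for a decomposable Bernoulli shift: an i.i.d. sequence `η` indexed by `ℤ`
together with i.i.d. copies `ηc s t ℓ` of `η 0`, the whole family being independent. -/
structure ShiftData (Ω : Type*) [MeasureSpace Ω] (S : Type*) [MeasurableSpace S] where
  η : ℤ → Ω → S
  ηc : ℤ → ℤ → ℕ → Ω → S
  meas_η : ∀ t, Measurable (η t)
  meas_ηc : ∀ s t ℓ, Measurable (ηc s t ℓ)
  ident : ∀ t, Measure.map (η t) ℙ = Measure.map (η 0) ℙ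
  ident_c : ∀ s t ℓ, Measure.map (ηc s t ℓ) ℙ = Measure.map (η 0) ℙ
  indep : iIndepFun
      (Sum.elim η fun p : ℤ × ℤ × ℕ => ηc p.1 p.2.1 p.2.2) ℙ

/-- The Bernoulli shift process `m_t = h(η_t, η_{t-1}, …)`. -/
def ShiftData.proc {S : Type*} [MeasurableSpace S] (D : ShiftData Ω S)
    (h : (ℕ → S) → ℝ) (t : ℤ) (ω : Ω) : ℝ :=
  h fun n => D.η (t - n) ω

/-- The coupled version `m̃_{t,ℓ} = h(η_t, …, η_{t-ℓ+1}, η̃_{t-ℓ,t,ℓ}, …)`, replacing the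
innovations at lags `≥ ℓ` with independent copies. -/
def ShiftData.coup {S : Type*} [MeasurableSpace S] (D : ShiftData Ω S)
    (h : (ℕ → S) → ℝ) (t : ℤ) (ℓ : ℕ) (ω : Ω) : ℝ :=
  h fun n => if n < ℓ then D.η (t - n) ω else D.ηc (t - n) t ℓ ω

/-- `X` is an `L_ν`-decomposable Bernoulli shift with rate `a`. -/
def IsBernoulliShift (X : ℤ → Ω → ℝ) (ν a : ℝ) : Prop :=
  ∃ (S : Type) (_ : MeasurableSpace S) (D : ShiftData Ω S) (h : (ℕ → S) → ℝ) (c₀ : ℝ),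
    Measurable h ∧ 0 < c₀ ∧
    (∀ t ω, X t ω = D.proc h t ω) ∧
    (∀ t, Integrable fun ω => |X t ω| ^ ν) ∧
    ∀ (t : ℤ) (ℓ : ℕ), 1 ≤ ℓ →
      (Integrable fun ω => |X t ω - D.coup h t ℓ ω| ^ ν) ∧
      lnorm (fun ω => X t ω - D.coup h t ℓ ω) ν ≤ c₀ * (ℓ : ℝ) ^ (-a)

/-- `X_m = O_P(b_m)`: for every `ε > 0` there is `M` with `sup_m P(|X_m| > M b_m) ≤ ε`. -/
def IsBigOP (X : ℕ → Ω → ℝ) (b : ℕ → ℝ) : Prop :=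
  ∀ ε : ℝ, 0 < ε → ∃ M : ℝ, ∀ m, (ℙ {ω | M * b m < |X m ω|}).toReal ≤ ε

/-- `X_m = o_P(1)`: convergence to zero in probability. -/
def IsoP (X : ℕ → Ω → ℝ) : Prop :=
  ∀ ε : ℝ, 0 < ε → Tendsto (fun m => (ℙ {ω | ε ≤ |X m ω|}).toReal) atTop (𝓝 0)

/-- A standard Wiener process: `W 0 = 0` a.s., independent Gaussian increments with the right
variances, and continuous paths. -/
structure IsStdWiener (W : ℝ → Ω → ℝ) : Prop where
  meas : ∀ t, Measurable (W t)
  zero : ∀ᵐ ω ∂(ℙ : Measure Ω), W 0 ω = 0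
  indep_incr : ∀ (n : ℕ) (t : Fin (n + 1) → ℝ), (∀ i, 0 ≤ t i) → Monotone t →
    iIndepFun
      (fun i : Fin n => fun ω => W (t i.succ) ω - W (t i.castSucc) ω) ℙ
  gauss_incr : ∀ s t : ℝ, 0 ≤ s → s ≤ t →
    Measure.map (fun ω => W t ω - W s ω) ℙ = gaussianReal 0 ((t - s).toNNReal)
  cont : ∀ᵐ ω ∂(ℙ : Measure Ω), Continuous fun t : ℝ => W t ω

/-- Convergence in distribution of real random variables (possibly defined on another
probability space), tested against bounded continuous functions. -/
def TendstoInDistrib {Ω' : Type*} [MeasureSpace Ω'] (X : ℕ → Ω → ℝ) (L : Ω' → ℝ) : Prop :=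
  ∀ f : ℝ → ℝ, Continuous f → (∃ M, ∀ x, |f x| ≤ M) →
    Tendsto (fun m => ∫ ω, f (X m ω)) atTop (𝓝 (∫ ω', f (L ω')))

/-- The training-sample least squares estimator. -/
def betaHat {d : ℕ} (x : ℤ → Ω → Fin d → ℝ) (y : ℤ → Ω → ℝ) (m : ℕ) (ω : Ω) :
    Fin d → ℝ :=
  (∑ t ∈ Finset.Icc (1 : ℤ) (m : ℤ), Matrix.vecMulVec (x t ω) (x t ω))⁻¹ *ᵥ
    ∑ t ∈ Finset.Icc (1 : ℤ) (m : ℤ), y t ω • x t ω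

/-- Monitoring residual at time `t`. -/
def resid {d : ℕ} (x : ℤ → Ω → Fin d → ℝ) (y : ℤ → Ω → ℝ) (m : ℕ) (t : ℤ) (ω : Ω) : ℝ :=
  y t ω - x t ω ⬝ᵥ betaHat x y m ω

/-- The CUSUM detector `Q(m;k) = Σ_{t=m+1}^{m+k} ε̂_t`. -/
def Qstat {d : ℕ} (x : ℤ → Ω → Fin d → ℝ) (y : ℤ → Ω → ℝ) (m k : ℕ) (ω : Ω) : ℝ :=
  ∑ t ∈ Finset.Icc ((m : ℤ) + 1) ((m : ℤ) + k), resid x y m t ω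

/-- The boundary function `g_η(m;k) = σ m^{1/2} (1 + k/m) (k/(m+k))^η`. -/
def gBound (σ η : ℝ) (m k : ℕ) : ℝ :=
  σ * (m : ℝ) ^ ((1 : ℝ) / 2) * (1 + (k : ℝ) / m) * ((k : ℝ) / (m + k)) ^ η

/-- The norming sequence `r_m = a_m / (a_m + m)`. -/
def rSeq (a : ℕ → ℕ) (m : ℕ) : ℝ := (a m : ℝ) / (a m + m)

/-- Assumption A1 (weak dependence of errors and regressors). -/
def AssumpA1 {d : ℕ} (x : ℤ → Ω → Fin d → ℝ) (ε : ℤ → Ω → ℝ) (aexp : ℝ) : Prop :=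
  2 < aexp ∧ IsBernoulliShift ε 4 aexp ∧ (∀ t, ∫ ω, ε t ω = 0) ∧
    (0 < ∫ ω, ε 0 ω ^ 2) ∧
    ∀ j : Fin d, (j : ℕ) ≠ 0 → IsBernoulliShift (fun t ω => x t ω j) 4 aexp

/-- Assumption A2 (exogeneity and non-degenerate second moments). -/
def AssumpA2 {d : ℕ} (x : ℤ → Ω → Fin d → ℝ) (ε : ℤ → Ω → ℝ)
    (C : Matrix (Fin d) (Fin d) ℝ) : Prop :=
  (∀ t, ∫ ω, ε t ω = 0) ∧
  (∀ (t : ℤ) (j : Fin d), (j : ℕ) ≠ 0 → ∫ ω, x t ω j * ε t ω = 0) ∧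
  (∀ (t : ℤ) (i j : Fin d), ∫ ω, x t ω i * x t ω j = C i j) ∧ C.PosDef

/-- The long-run variance `σ² = lim_m E (m^{-1/2} Σ_{t=1}^m ε_t)²`. -/
def IsLongRunVar (ε : ℤ → Ω → ℝ) (σ2 : ℝ) : Prop :=
  Tendsto (fun m : ℕ => ∫ ω, ((m : ℝ) ^ (-(1 : ℝ) / 2) * ∑ t ∈ Finset.Icc (1 : ℤ) (m : ℤ), ε t ω) ^ 2)
    atTop (𝓝 σ2)

/-- The trimming conditions: `a_m → ∞`, `a_m / min{m, T_m} → 0`, and `a_m ≤ T_m`. -/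
def Trimming (a T : ℕ → ℕ) : Prop :=
  Tendsto a atTop atTop ∧
  Tendsto (fun m => (a m : ℝ) / min (m : ℝ) (T m : ℝ)) atTop (𝓝 0) ∧
  ∀ m, a m ≤ T m

open Classical in
/-- First crossing time in `[lo, T]`, equal to `T` if no crossing occurs. -/
def stopTime (T : ℕ) (lo : ℕ) (cross : ℕ → Prop) : ℕ :=
  if (∃ k, lo ≤ k ∧ k ≤ T ∧ cross k) then sInf {k | lo ≤ k ∧ k ≤ T ∧ cross k} else T

/-- `sup_{1 ≤ u < ∞} |W(u)|/u^η`. -/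
def wienerSupTail {Ω' : Type*} [MeasureSpace Ω'] (W : ℝ → Ω' → ℝ) (η : ℝ) (ω : Ω') : ℝ :=
  ⨆ u : {u : ℝ // 1 ≤ u}, |W u ω| / (u : ℝ) ^ η


/-- Sample autocovariance of the residuals, `γ̂_j = m⁻¹ Σ_{t=j+1}^m ε̂_t ε̂_{t-j}`. -/
def gammaHat {d : ℕ} (x : ℤ → Ω → Fin d → ℝ) (y : ℤ → Ω → ℝ) (m j : ℕ) (ω : Ω) : ℝ :=
  (m : ℝ)⁻¹ * ∑ t ∈ Finset.Icc ((j : ℤ) + 1) (m : ℤ), resid x y m t ω * resid x y m (t - j) ω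

/-- The Bartlett long-run variance estimator with bandwidth `H`. -/
def sigmaHatSq {d : ℕ} (x : ℤ → Ω → Fin d → ℝ) (y : ℤ → Ω → ℝ) (H m : ℕ) (ω : Ω) : ℝ :=
  gammaHat x y m 0 ω + 2 * ∑ j ∈ Finset.Icc 1 H, (1 - (j : ℝ) / (H + 1)) * gammaHat x y m j ω

/-- Regressor vector of the dynamic model: exogenous regressors followed by `p` lags of `y`. -/
def xdyn {dz p : ℕ} (z : ℤ → Ω → Fin dz → ℝ) (y : ℤ → Ω → ℝ) (t : ℤ) (ω : Ω) :
    Fin (dz + p) → ℝ :=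
  Fin.append (z t ω) fun i : Fin p => y (t - 1 - (i : ℕ)) ω

end OnlineCPD

namespace OnlineCPD

set_option linter.unusedSectionVars false

open scoped ENNReal NNReal

section Aux

lemma summable_iff_tsum_nnnorm_lt_top {F : ℕ → ℝ} :
    Summable F ↔ (∑' n, (‖F n‖₊ : ℝ≥0∞)) < ∞ := by
  rw [lt_top_iff_ne_top, ENNReal.tsum_coe_ne_top_iff_summable]
  constructor
  · intro h
    rw [← NNReal.summable_coe]
    simpa only [coe_nnnorm, Real.norm_eq_abs] using h.abs
  · intro h
    have : Summable fun n => (‖F n‖₊ : ℝ) := NNReal.summable_coe.2 h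
    simp only [coe_nnnorm, Real.norm_eq_abs] at this
    exact summable_abs_iff.1 this

lemma measurable_tsum_real {δ : Type*} [MeasurableSpace δ] {F : ℕ → δ → ℝ}
    (hF : ∀ n, Measurable (F n)) : Measurable fun x => ∑' n, F n x := by
  classical
  have hg : ∀ n, Measurable fun x => ∑ j ∈ Finset.range n, F j x :=
    fun n => Finset.measurable_sum _ (fun j _ => hF j)
  have hBset : MeasurableSet {x | Summable fun n => F n x} := by
    have he : {x | Summable fun n => F n x}
        = {x | (∑' n, (‖F n x‖₊ : ℝ≥0∞)) < ∞} := by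
      ext x; exact summable_iff_tsum_nnnorm_lt_top
    rw [he]
    exact measurableSet_lt (Measurable.ennreal_tsum fun n => (hF n).nnnorm.coe_nnreal_ennreal)
      measurable_const
  have heq : (fun x => ∑' n, F n x) = fun x =>
      if Summable (fun n => F n x) then
        Filter.limsup (fun n => ∑ j ∈ Finset.range n, F j x) Filter.atTop else 0 := by
    funext x
    split_ifs with hs
    · exact (hs.hasSum.tendsto_sum_nat.limsup_eq).symm
    · exact tsum_eq_zero_of_not_summable hs
  rw [heq]
  exact Measurable.ite hBset (Measurable.limsup hg) measurable_const

variable {Ω : Type*} [MeasureSpace Ω] [IsProbabilityMeasure (ℙ : Measure Ω)]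
  {S : Type*} [MeasurableSpace S]

/-- The combined i.i.d. family of innovations and their copies. -/
def ShiftData.X (D : ShiftData Ω S) : ℤ ⊕ ℤ × ℤ × ℕ → Ω → S :=
  Sum.elim D.η fun p : ℤ × ℤ × ℕ => D.ηc p.1 p.2.1 p.2.2

lemma ShiftData.meas_X (D : ShiftData Ω S) (i : ℤ ⊕ ℤ × ℤ × ℕ) : Measurable (D.X i) := by
  cases i with
  | inl t => exact D.meas_η t
  | inr p => exact D.meas_ηc p.1 p.2.1 p.2.2

lemma ShiftData.map_X (D : ShiftData Ω S) (i : ℤ ⊕ ℤ × ℤ × ℕ) :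
    Measure.map (D.X i) ℙ = Measure.map (D.η 0) ℙ := by
  cases i with
  | inl t => exact D.ident t
  | inr p => exact D.ident_c p.1 p.2.1 p.2.2

lemma ShiftData.measure_iInter (D : ShiftData Ω S) {ι : Type*} (f : ι → ℤ ⊕ ℤ × ℤ × ℕ)
    (hf : Function.Injective f) (s : Finset ι) (t : ι → Set S)
    (ht : ∀ i ∈ s, MeasurableSet (t i)) :
    ℙ (⋂ i ∈ s, D.X (f i) ⁻¹' t i) = ∏ i ∈ s, ℙ (D.X (f i) ⁻¹' t i) := by
  classical
  set sets : (ℤ ⊕ ℤ × ℤ × ℕ) → Set S := fun x =>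
    if h : ∃ i ∈ s, f i = x then t h.choose else Set.univ with hsets
  have hsets_f : ∀ i ∈ s, sets (f i) = t i := by
    intro i hi
    have h : ∃ i' ∈ s, f i' = f i := ⟨i, hi, rfl⟩
    rw [hsets]; simp only [dif_pos h]
    exact congrArg t (hf h.choose_spec.2)
  have key := D.indep.measure_inter_preimage_eq_mul (S := s.image f) (sets := sets)
    (fun x hx => by
      rw [Finset.mem_image] at hx
      obtain ⟨i, hi, rfl⟩ := hx
      rw [hsets_f i hi]; exact ht i hi)
  have hInter : (⋂ x ∈ s.image f,
      (Sum.elim D.η fun p : ℤ × ℤ × ℕ => D.ηc p.1 p.2.1 p.2.2) x ⁻¹' sets x)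
      = ⋂ i ∈ s, D.X (f i) ⁻¹' t i := by
    ext ω
    simp only [Set.mem_iInter, Finset.mem_image, forall_exists_index, and_imp]
    constructor
    · intro h i hi
      have := h (f i) i hi rfl
      rwa [hsets_f i hi] at this
    · rintro h x i hi rfl
      rw [hsets_f i hi]; exact h i hi
  have hProd : ∏ x ∈ s.image f,
      ℙ ((Sum.elim D.η fun p : ℤ × ℤ × ℕ => D.ηc p.1 p.2.1 p.2.2) x ⁻¹' sets x)
      = ∏ i ∈ s, ℙ (D.X (f i) ⁻¹' t i) := by
    rw [Finset.prod_image (fun a _ b _ h => hf h)]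
    exact Finset.prod_congr rfl fun i hi => by rw [hsets_f i hi]; rfl
  rw [hInter, hProd] at key
  exact key

lemma ShiftData.identDistrib_seq (D : ShiftData Ω S) {ι : Type*}
    (f g : ι → ℤ ⊕ ℤ × ℤ × ℕ) (hf : Function.Injective f) (hg : Function.Injective g) :
    IdentDistrib (fun ω (i : ι) => D.X (f i) ω) (fun ω (i : ι) => D.X (g i) ω) ℙ ℙ := by
  have hmf : Measurable fun ω (i : ι) => D.X (f i) ω :=
    measurable_pi_lambda _ fun i => D.meas_X (f i)
  have hmg : Measurable fun ω (i : ι) => D.X (g i) ω :=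
    measurable_pi_lambda _ fun i => D.meas_X (g i)
  refine ⟨hmf.aemeasurable, hmg.aemeasurable, ?_⟩
  haveI h1 : IsProbabilityMeasure (Measure.map (fun ω (i : ι) => D.X (f i) ω) ℙ) :=
    Measure.isProbabilityMeasure_map hmf.aemeasurable
  haveI h2 : IsProbabilityMeasure (Measure.map (fun ω (i : ι) => D.X (g i) ω) ℙ) :=
    Measure.isProbabilityMeasure_map hmg.aemeasurable
  refine MeasureTheory.ext_of_generate_finite _ generateFrom_squareCylinders.symm
    (isPiSystem_squareCylinders (fun _ => MeasurableSpace.isPiSystem_measurableSet)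
      (fun _ => MeasurableSet.univ)) ?_ (by simp)
  rintro T ⟨s, t, ht, rfl⟩
  rw [Set.mem_univ_pi] at ht
  have hT : MeasurableSet ((s : Set ι).pi t) :=
    MeasurableSet.pi s.countable_toSet (fun i _ => ht i)
  rw [Measure.map_apply hmf hT, Measure.map_apply hmg hT]
  have hpre : ∀ (F : ι → ℤ ⊕ ℤ × ℤ × ℕ),
      (fun ω (i : ι) => D.X (F i) ω) ⁻¹' ((s : Set ι).pi t) = ⋂ i ∈ s, D.X (F i) ⁻¹' t i := by
    intro F; ext ω
    simp [Set.mem_pi]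
  rw [hpre f, hpre g, D.measure_iInter f hf s t (fun i _ => ht i),
    D.measure_iInter g hg s t (fun i _ => ht i)]
  refine Finset.prod_congr rfl fun i _ => ?_
  rw [← Measure.map_apply (D.meas_X (f i)) (ht i), ← Measure.map_apply (D.meas_X (g i)) (ht i),
    D.map_X, D.map_X]

lemma ShiftData.identDistrib_comp (D : ShiftData Ω S) {ι : Type*}
    (f g : ι → ℤ ⊕ ℤ × ℤ × ℕ) (hf : Function.Injective f) (hg : Function.Injective g)
    {F : (ι → S) → ℝ} (hF : Measurable F) :
    IdentDistrib (fun ω => F fun i => D.X (f i) ω) (fun ω => F fun i => D.X (g i) ω) ℙ ℙ :=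
  (D.identDistrib_seq f g hf hg).comp hF

section Aux2
variable {Ω : Type*} [MeasureSpace Ω] [IsProbabilityMeasure (ℙ : Measure Ω)]

lemma enorm_rpow_four (x : ℝ) :
    ((‖x‖₊ : ℝ≥0∞)) ^ (4:ℝ) = ENNReal.ofReal (|x| ^ (4:ℝ)) := by
  rw [← enorm_eq_nnnorm, ← ofReal_norm, Real.norm_eq_abs,
    ENNReal.ofReal_rpow_of_nonneg (abs_nonneg x) (by norm_num)]

lemma memLp_four_of_integrable {f : Ω → ℝ} (hf : AEStronglyMeasurable f ℙ)
    (h : Integrable fun ω => |f ω| ^ (4:ℝ)) : MemLp f 4 ℙ := by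
  refine ⟨hf, ?_⟩
  rw [eLpNorm_eq_lintegral_rpow_enorm_toReal (by norm_num) (by norm_num)]
  have h4 : (4 : ℝ≥0∞).toReal = (4:ℝ) := by norm_num
  rw [h4]
  have hlt : (∫⁻ ω, (‖f ω‖₊ : ℝ≥0∞) ^ (4:ℝ) ∂ℙ) < ∞ := by
    simp_rw [enorm_rpow_four]
    rw [← hasFiniteIntegral_iff_ofReal (Filter.Eventually.of_forall fun ω =>
      Real.rpow_nonneg (abs_nonneg _) _)]
    exact h.hasFiniteIntegral
  exact ENNReal.rpow_lt_top_of_nonneg (by norm_num) hlt.ne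

lemma lnorm_eq_toReal_eLpNorm {f : Ω → ℝ} (hf : MemLp f 4 ℙ) :
    lnorm f 4 = (eLpNorm f 4 ℙ).toReal := by
  rw [hf.eLpNorm_eq_integral_rpow_norm (by norm_num) (by norm_num)]
  have h4 : (4 : ℝ≥0∞).toReal = (4:ℝ) := by norm_num
  rw [ENNReal.toReal_ofReal (Real.rpow_nonneg
    (integral_nonneg fun ω => Real.rpow_nonneg (norm_nonneg _) _) _)]
  simp only [lnorm, h4, Real.norm_eq_abs, one_div]

lemma lnorm_le_of_eLpNorm_le {f : Ω → ℝ} {c : ℝ} (hf : MemLp f 4 ℙ) (hc : 0 ≤ c)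
    (h : eLpNorm f 4 ℙ ≤ ENNReal.ofReal c) : lnorm f 4 ≤ c := by
  rw [lnorm_eq_toReal_eLpNorm hf]
  calc (eLpNorm f 4 ℙ).toReal ≤ (ENNReal.ofReal c).toReal :=
        ENNReal.toReal_mono ENNReal.ofReal_ne_top h
    _ = c := ENNReal.toReal_ofReal hc

lemma eLpNorm_eq_ofReal_lnorm {f : Ω → ℝ} (hf : MemLp f 4 ℙ) :
    eLpNorm f 4 ℙ = ENNReal.ofReal (lnorm f 4) := by
  rw [lnorm_eq_toReal_eLpNorm hf, ENNReal.ofReal_toReal hf.eLpNorm_ne_top]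

lemma eLpNorm_tsum_le {g : ℕ → Ω → ℝ} (hg : ∀ j, Measurable (g j)) :
    eLpNorm (fun ω => ∑' j, g j ω) 4 ℙ ≤ ∑' j, eLpNorm (g j) 4 ℙ := by
  set B := ∑' j, eLpNorm (g j) 4 ℙ with hB
  set φ : ℕ → Ω → ℝ := fun n ω => ∑ j ∈ Finset.range n, g j ω with hφ
  have hφm : ∀ n, Measurable (φ n) := fun n => Finset.measurable_sum _ fun j _ => hg j
  have h4 : (4 : ℝ≥0∞).toReal = (4:ℝ) := by norm_num
  have hc : Continuous fun x : ℝ => ((‖x‖₊ : ℝ≥0∞)) ^ (4:ℝ) :=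
    (ENNReal.continuous_rpow_const.comp (ENNReal.continuous_coe.comp continuous_nnnorm))
  have hpt : ∀ ω, ((‖∑' j, g j ω‖₊ : ℝ≥0∞)) ^ (4:ℝ)
      ≤ Filter.liminf (fun n => ((‖φ n ω‖₊ : ℝ≥0∞)) ^ (4:ℝ)) Filter.atTop := by
    intro ω
    by_cases hs : Summable fun j => g j ω
    · have h1 : Filter.Tendsto (fun n => φ n ω) Filter.atTop (𝓝 (∑' j, g j ω)) :=
        hs.hasSum.tendsto_sum_nat
    
      have h2 := ((hc.tendsto _).comp h1)
      rw [← h2.liminf_eq]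
      rfl
    · rw [tsum_eq_zero_of_not_summable hs]
      simp only [nnnorm_zero, ENNReal.coe_zero]
      rw [ENNReal.zero_rpow_of_pos (by norm_num)]
      exact zero_le
  have key : (∫⁻ ω, ((‖∑' j, g j ω‖₊ : ℝ≥0∞)) ^ (4:ℝ) ∂ℙ) ≤ B ^ (4:ℝ) := by
    calc (∫⁻ ω, ((‖∑' j, g j ω‖₊ : ℝ≥0∞)) ^ (4:ℝ) ∂ℙ)
        ≤ ∫⁻ ω, Filter.liminf (fun n => ((‖φ n ω‖₊ : ℝ≥0∞)) ^ (4:ℝ)) Filter.atTop ∂ℙ :=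
          lintegral_mono hpt
      _ ≤ Filter.liminf (fun n => ∫⁻ ω, ((‖φ n ω‖₊ : ℝ≥0∞)) ^ (4:ℝ) ∂ℙ) Filter.atTop :=
          lintegral_liminf_le fun n =>
            ((hφm n).nnnorm.coe_nnreal_ennreal).pow_const _
      _ ≤ B ^ (4:ℝ) := by
          refine Filter.liminf_le_of_frequently_le' (Filter.Frequently.of_forall fun n => ?_)
          have h1 : (∫⁻ ω, ((‖φ n ω‖₊ : ℝ≥0∞)) ^ (4:ℝ) ∂ℙ) = (eLpNorm (φ n) 4 ℙ) ^ (4:ℝ) := by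
            rw [eLpNorm_eq_lintegral_rpow_enorm_toReal (by norm_num) (by norm_num), h4,
              ← ENNReal.rpow_mul]
            norm_num
            rfl
          rw [h1]
          refine ENNReal.rpow_le_rpow ?_ (by norm_num)
          have h2 : eLpNorm (φ n) 4 ℙ ≤ ∑ j ∈ Finset.range n, eLpNorm (g j) 4 ℙ := by
            have := eLpNorm_sum_le (μ := (ℙ : Measure Ω)) (s := Finset.range n) (f := g)
              (fun j _ => (hg j).aestronglyMeasurable) (by norm_num : (1:ℝ≥0∞) ≤ 4)
            have heq : (∑ j ∈ Finset.range n, g j) = φ n := by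
              funext ω; simp [hφ]
            rwa [heq] at this
          exact h2.trans (ENNReal.sum_le_tsum _)
  rw [eLpNorm_eq_lintegral_rpow_enorm_toReal (by norm_num) (by norm_num), h4]
  calc (∫⁻ ω, ((‖∑' j, g j ω‖₊ : ℝ≥0∞)) ^ (4:ℝ) ∂ℙ) ^ (1/(4:ℝ))
      ≤ (B ^ (4:ℝ)) ^ (1/(4:ℝ)) := ENNReal.rpow_le_rpow key (by norm_num)
    _ = B := by rw [← ENNReal.rpow_mul]; norm_num

lemma ae_summable_of_lintegral_bound {Z : ℕ → Ω → ℝ} (hZ : ∀ j, AEMeasurable (Z j) ℙ)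
    (c : ℝ≥0∞) (hc : c ≠ ∞) (r : ℝ) (hr0 : 0 ≤ r) (hr1 : r < 1)
    (hb : ∀ j, (∫⁻ ω, (‖Z j ω‖₊ : ℝ≥0∞) ∂ℙ) ≤ ENNReal.ofReal (r ^ j) * c) :
    ∀ᵐ ω ∂(ℙ : Measure Ω), Summable fun j => Z j ω := by
  have h1 : (∫⁻ ω, ∑' j, (‖Z j ω‖₊ : ℝ≥0∞) ∂ℙ) < ∞ := by
    rw [lintegral_tsum fun j => (hZ j).nnnorm.coe_nnreal_ennreal]
    calc ∑' j, ∫⁻ ω, (‖Z j ω‖₊ : ℝ≥0∞) ∂ℙ ≤ ∑' j, ENNReal.ofReal (r ^ j) * c :=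
          ENNReal.tsum_le_tsum hb
      _ = (∑' j, ENNReal.ofReal (r ^ j)) * c := by rw [ENNReal.tsum_mul_right]
      _ < ∞ := by
          refine ENNReal.mul_lt_top ?_ hc.lt_top
          rw [← ENNReal.ofReal_tsum_of_nonneg (fun j => pow_nonneg hr0 j)
            (summable_geometric_of_lt_one hr0 hr1)]
          exact ENNReal.ofReal_lt_top
  have h2 := ae_lt_top' (AEMeasurable.ennreal_tsum fun j => (hZ j).nnnorm.coe_nnreal_ennreal) h1.ne
  filter_upwards [h2] with ω hω
  exact summable_iff_tsum_nnnorm_lt_top.2 hω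

end Aux2

lemma exists_pow_le_rpow (r a : ℝ) (hr0 : 0 ≤ r) (hr1 : r < 1) (ha : 0 < a) :
    ∃ C : ℝ, 0 < C ∧ ∀ ℓ : ℕ, 1 ≤ ℓ → r ^ ℓ ≤ C * (ℓ:ℝ) ^ (-a) := by
  set k := ⌈a⌉₊ with hk
  have hsum : Summable (fun n : ℕ => (n:ℝ) ^ k * r ^ n) :=
    summable_pow_mul_geometric_of_norm_lt_one k
      (by rwa [Real.norm_eq_abs, abs_of_nonneg hr0])
  set C := max 1 (∑' n : ℕ, (n:ℝ) ^ k * r ^ n) with hC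
  refine ⟨C, lt_of_lt_of_le zero_lt_one (le_max_left _ _), fun ℓ hℓ => ?_⟩
  have hℓR : (1:ℝ) ≤ (ℓ:ℝ) := by exact_mod_cast hℓ
  have hℓ0 : (0:ℝ) < (ℓ:ℝ) := lt_of_lt_of_le zero_lt_one hℓR
  have h1 : (ℓ:ℝ) ^ a * r ^ ℓ ≤ C := by
    have h2 : (ℓ:ℝ) ^ a ≤ (ℓ:ℝ) ^ (k:ℝ) :=
      Real.rpow_le_rpow_of_exponent_le hℓR (Nat.le_ceil a)
    rw [Real.rpow_natCast] at h2
    have h4 : (ℓ:ℝ) ^ k * r ^ ℓ ≤ ∑' n : ℕ, (n:ℝ) ^ k * r ^ n :=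
      Summable.le_tsum hsum ℓ fun n _ =>
        mul_nonneg (pow_nonneg (Nat.cast_nonneg n) k) (pow_nonneg hr0 n)
    have h5 : (ℓ:ℝ) ^ a * r ^ ℓ ≤ (ℓ:ℝ) ^ k * r ^ ℓ :=
      mul_le_mul_of_nonneg_right h2 (pow_nonneg hr0 ℓ)
    exact h5.trans (h4.trans (le_max_right _ _))
  have hpos : (0:ℝ) < (ℓ:ℝ) ^ (-a) := Real.rpow_pos_of_pos hℓ0 _
  have hrw : r ^ ℓ = (ℓ:ℝ) ^ (-a) * ((ℓ:ℝ) ^ a * r ^ ℓ) := by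
    rw [← mul_assoc, ← Real.rpow_add hℓ0]
    simp
  rw [hrw, mul_comm C _]
  exact mul_le_mul_of_nonneg_left h1 hpos.le

lemma exists_conv_bound (r a : ℝ) (hr0 : 0 ≤ r) (hr1 : r < 1) (ha : 2 < a) :
    ∃ C : ℝ, 0 < C ∧ ∀ ℓ : ℕ, 1 ≤ ℓ →
      ∑ j ∈ Finset.range ℓ, r ^ j * ((ℓ - j : ℕ) : ℝ) ^ (-a) ≤ C * (ℓ:ℝ) ^ (-a) := by
  classical
  have ha0 : 0 < a := by linarith
  -- summability of k ↦ (k+1)^(-a)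
  have hsummA : Summable (fun n : ℕ => (n:ℝ) ^ (-a)) :=
    Real.summable_nat_rpow.2 (by linarith)
  have hsummA' : Summable (fun n : ℕ => ((n:ℝ) + 1) ^ (-a)) := by
    have := (summable_nat_add_iff (f := fun n : ℕ => (n:ℝ) ^ (-a)) 1).2 hsummA
    simpa using this
  set Ka := ∑' n : ℕ, ((n:ℝ) + 1) ^ (-a) with hKa
  have hKa0 : 0 ≤ Ka := tsum_nonneg fun n => Real.rpow_nonneg (by positivity) _
  -- the sqrt trick
  set s := Real.sqrt r with hs
  have hs0 : 0 ≤ s := Real.sqrt_nonneg r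
  have hs1 : s < 1 := by
    rw [hs, show (1:ℝ) = Real.sqrt 1 by simp]
    exact Real.sqrt_lt_sqrt hr0 hr1
  obtain ⟨C2, hC2pos, hC2⟩ := exists_pow_le_rpow s a hs0 hs1 ha0
  refine ⟨(2:ℝ) ^ a * (1 - r)⁻¹ + C2 * Ka + 1, ?_, fun ℓ hℓ => ?_⟩
  · have h2a := Real.rpow_pos_of_pos (by norm_num : (0:ℝ) < 2) a
    have h1r : (0:ℝ) < (1 - r)⁻¹ := inv_pos.2 (by linarith)
    nlinarith [mul_nonneg hC2pos.le hKa0]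
  have hℓR : (1:ℝ) ≤ (ℓ:ℝ) := by exact_mod_cast hℓ
  have hℓ0 : (0:ℝ) < (ℓ:ℝ) := lt_of_lt_of_le zero_lt_one hℓR
  have hla : (0:ℝ) < (ℓ:ℝ) ^ (-a) := Real.rpow_pos_of_pos hℓ0 _
  rw [← Finset.sum_filter_add_sum_filter_not (Finset.range ℓ) (fun j => 2 * j ≤ ℓ)]
  have hgeom : ∑ j ∈ Finset.range ℓ, r ^ j ≤ (1 - r)⁻¹ := by
    have h1 := Summable.sum_le_tsum (Finset.range ℓ) (fun j _ => pow_nonneg hr0 j)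
      (summable_geometric_of_lt_one hr0 hr1)
    rwa [tsum_geometric_of_lt_one hr0 hr1] at h1
  have hA : ∑ j ∈ (Finset.range ℓ).filter (fun j => 2 * j ≤ ℓ), r ^ j * ((ℓ - j : ℕ) : ℝ) ^ (-a)
      ≤ (2:ℝ) ^ a * (1 - r)⁻¹ * (ℓ:ℝ) ^ (-a) := by
    have hterm : ∀ j ∈ (Finset.range ℓ).filter (fun j => 2 * j ≤ ℓ),
        r ^ j * ((ℓ - j : ℕ) : ℝ) ^ (-a) ≤ r ^ j * ((2:ℝ) ^ a * (ℓ:ℝ) ^ (-a)) := by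
      intro j hj
      rw [Finset.mem_filter, Finset.mem_range] at hj
      obtain ⟨hjℓ, hj2⟩ := hj
      refine mul_le_mul_of_nonneg_left ?_ (pow_nonneg hr0 j)
      have hcast : ((ℓ - j : ℕ) : ℝ) = (ℓ:ℝ) - (j:ℝ) := by
        rw [Nat.cast_sub hjℓ.le]
      have hge : (ℓ:ℝ) / 2 ≤ ((ℓ - j : ℕ) : ℝ) := by
        rw [hcast]
        have : (2:ℝ) * j ≤ ℓ := by exact_mod_cast hj2
        linarith
      have hhalf : (0:ℝ) < (ℓ:ℝ) / 2 := by linarith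
      calc ((ℓ - j : ℕ) : ℝ) ^ (-a) ≤ ((ℓ:ℝ) / 2) ^ (-a) :=
            Real.rpow_le_rpow_of_nonpos hhalf hge (by linarith)
        _ = (2:ℝ) ^ a * (ℓ:ℝ) ^ (-a) := by
            rw [Real.div_rpow hℓ0.le (by norm_num : (0:ℝ) ≤ 2), Real.rpow_neg (by norm_num : (0:ℝ) ≤ 2),
              div_eq_mul_inv, inv_inv, mul_comm]
    calc ∑ j ∈ (Finset.range ℓ).filter (fun j => 2 * j ≤ ℓ), r ^ j * ((ℓ - j : ℕ) : ℝ) ^ (-a)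
        ≤ ∑ j ∈ (Finset.range ℓ).filter (fun j => 2 * j ≤ ℓ), r ^ j * ((2:ℝ) ^ a * (ℓ:ℝ) ^ (-a)) :=
          Finset.sum_le_sum hterm
      _ = (∑ j ∈ (Finset.range ℓ).filter (fun j => 2 * j ≤ ℓ), r ^ j) * ((2:ℝ) ^ a * (ℓ:ℝ) ^ (-a)) := by
          rw [Finset.sum_mul]
      _ ≤ (1 - r)⁻¹ * ((2:ℝ) ^ a * (ℓ:ℝ) ^ (-a)) := by
          refine mul_le_mul_of_nonneg_right ?_ (by positivity)
          refine le_trans ?_ hgeom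
          exact Finset.sum_le_sum_of_subset_of_nonneg (Finset.filter_subset _ _)
            fun j _ _ => pow_nonneg hr0 j
      _ = (2:ℝ) ^ a * (1 - r)⁻¹ * (ℓ:ℝ) ^ (-a) := by ring
  have hB : ∑ j ∈ (Finset.range ℓ).filter (fun j => ¬ 2 * j ≤ ℓ), r ^ j * ((ℓ - j : ℕ) : ℝ) ^ (-a)
      ≤ C2 * Ka * (ℓ:ℝ) ^ (-a) := by
    have hsl : s ^ ℓ ≤ C2 * (ℓ:ℝ) ^ (-a) := hC2 ℓ hℓ
    have hterm : ∀ j ∈ (Finset.range ℓ).filter (fun j => ¬ 2 * j ≤ ℓ),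
        r ^ j * ((ℓ - j : ℕ) : ℝ) ^ (-a) ≤ (C2 * (ℓ:ℝ) ^ (-a)) * ((ℓ - j : ℕ) : ℝ) ^ (-a) := by
      intro j hj
      rw [Finset.mem_filter, Finset.mem_range] at hj
      obtain ⟨hjℓ, hj2⟩ := hj
      push_neg at hj2
      refine mul_le_mul_of_nonneg_right ?_ (Real.rpow_nonneg (Nat.cast_nonneg _) _)
      have hr_eq : r ^ j = s ^ (2 * j) := by
        rw [pow_mul, hs, Real.sq_sqrt hr0]
      rw [hr_eq]
      exact (pow_le_pow_of_le_one hs0 hs1.le hj2.le).trans hsl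
    have hsum2 : ∑ j ∈ (Finset.range ℓ).filter (fun j => ¬ 2 * j ≤ ℓ), ((ℓ - j : ℕ) : ℝ) ^ (-a)
        ≤ Ka := by
      have hfull : ∑ j ∈ (Finset.range ℓ).filter (fun j => ¬ 2 * j ≤ ℓ), ((ℓ - j : ℕ) : ℝ) ^ (-a)
          ≤ ∑ j ∈ Finset.range ℓ, ((ℓ - j : ℕ) : ℝ) ^ (-a) :=
        Finset.sum_le_sum_of_subset_of_nonneg (Finset.filter_subset _ _)
          fun j _ _ => Real.rpow_nonneg (Nat.cast_nonneg _) _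
      have hrefl : ∑ j ∈ Finset.range ℓ, ((ℓ - j : ℕ) : ℝ) ^ (-a)
          = ∑ j ∈ Finset.range ℓ, ((j:ℝ) + 1) ^ (-a) := by
        rw [← Finset.sum_range_reflect (fun j => ((j:ℝ) + 1) ^ (-a)) ℓ]
        refine Finset.sum_congr rfl fun j hj => ?_
        rw [Finset.mem_range] at hj
        congr 1
        rw [show ℓ - j = (ℓ - 1 - j) + 1 by omega]
        push_cast
        ring
      have htail : ∑ j ∈ Finset.range ℓ, ((j:ℝ) + 1) ^ (-a) ≤ Ka :=
        Summable.sum_le_tsum (Finset.range ℓ) (fun j _ => Real.rpow_nonneg (by positivity) _) hsummA'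
      calc _ ≤ _ := hfull
        _ = _ := hrefl
        _ ≤ Ka := htail
    calc ∑ j ∈ (Finset.range ℓ).filter (fun j => ¬ 2 * j ≤ ℓ), r ^ j * ((ℓ - j : ℕ) : ℝ) ^ (-a)
        ≤ ∑ j ∈ (Finset.range ℓ).filter (fun j => ¬ 2 * j ≤ ℓ),
            (C2 * (ℓ:ℝ) ^ (-a)) * ((ℓ - j : ℕ) : ℝ) ^ (-a) := Finset.sum_le_sum hterm
      _ = (C2 * (ℓ:ℝ) ^ (-a)) * ∑ j ∈ (Finset.range ℓ).filter (fun j => ¬ 2 * j ≤ ℓ),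
            ((ℓ - j : ℕ) : ℝ) ^ (-a) := by rw [Finset.mul_sum]
      _ ≤ (C2 * (ℓ:ℝ) ^ (-a)) * Ka := by
          exact mul_le_mul_of_nonneg_left hsum2 (mul_nonneg hC2pos.le hla.le)
      _ = C2 * Ka * (ℓ:ℝ) ^ (-a) := by ring
  have := add_le_add hA hB
  nlinarith [hla]

lemma exists_total_bound (r a cu K : ℝ) (hr0 : 0 ≤ r) (hr1 : r < 1) (ha : 2 < a)
    (hcu : 0 ≤ cu) (hK : 0 ≤ K) :
    ∃ C : ℝ, 0 < C ∧ ∀ ℓ : ℕ, 1 ≤ ℓ →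
      Summable (fun j : ℕ => r ^ j * (if j < ℓ then cu * ((ℓ - j : ℕ):ℝ) ^ (-a) else K)) ∧
      (∑' j : ℕ, r ^ j * (if j < ℓ then cu * ((ℓ - j : ℕ):ℝ) ^ (-a) else K))
        ≤ C * (ℓ:ℝ) ^ (-a) := by
  classical
  obtain ⟨C1, hC1pos, hC1⟩ := exists_conv_bound r a hr0 hr1 ha
  obtain ⟨C2, hC2pos, hC2⟩ := exists_pow_le_rpow r a hr0 hr1 (by linarith)
  refine ⟨cu * C1 + K * (1 - r)⁻¹ * C2 + 1, ?_, fun ℓ hℓ => ?_⟩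
  · have h1r : (0:ℝ) < (1 - r)⁻¹ := inv_pos.2 (by linarith)
    nlinarith [mul_nonneg hcu hC1pos.le, mul_nonneg (mul_nonneg hK h1r.le) hC2pos.le]
  set b : ℕ → ℝ := fun j => r ^ j * (if j < ℓ then cu * ((ℓ - j : ℕ):ℝ) ^ (-a) else K) with hb
  have hbnn : ∀ j, 0 ≤ b j := by
    intro j
    refine mul_nonneg (pow_nonneg hr0 j) ?_
    split_ifs
    · exact mul_nonneg hcu (Real.rpow_nonneg (Nat.cast_nonneg _) _)
    · exact hK
  have hble : ∀ j, b j ≤ r ^ j * max cu K := by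
    intro j
    refine mul_le_mul_of_nonneg_left ?_ (pow_nonneg hr0 j)
    split_ifs with h
    · calc cu * ((ℓ - j : ℕ):ℝ) ^ (-a) ≤ cu * 1 := by
            refine mul_le_mul_of_nonneg_left ?_ hcu
            refine Real.rpow_le_one_of_one_le_of_nonpos ?_ (by linarith)
            have : 1 ≤ ℓ - j := by omega
            exact_mod_cast this
        _ = cu := mul_one cu
        _ ≤ max cu K := le_max_left _ _
    · exact le_max_right _ _
  have hsb : Summable b :=
    Summable.of_nonneg_of_le hbnn hble ((summable_geometric_of_lt_one hr0 hr1).mul_right _)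
  refine ⟨hsb, ?_⟩
  have hla : (0:ℝ) < (ℓ:ℝ) ^ (-a) :=
    Real.rpow_pos_of_pos (by exact_mod_cast Nat.lt_of_lt_of_le Nat.zero_lt_one hℓ) _
  rw [← Summable.sum_add_tsum_nat_add ℓ hsb]
  have h1 : ∑ j ∈ Finset.range ℓ, b j ≤ cu * C1 * (ℓ:ℝ) ^ (-a) := by
    have : ∑ j ∈ Finset.range ℓ, b j
        = cu * ∑ j ∈ Finset.range ℓ, r ^ j * ((ℓ - j : ℕ):ℝ) ^ (-a) := by
      rw [Finset.mul_sum]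
      refine Finset.sum_congr rfl fun j hj => ?_
      rw [Finset.mem_range] at hj
      rw [hb]
      simp only [if_pos hj]
      ring
    rw [this]
    calc cu * ∑ j ∈ Finset.range ℓ, r ^ j * ((ℓ - j : ℕ):ℝ) ^ (-a)
        ≤ cu * (C1 * (ℓ:ℝ) ^ (-a)) := mul_le_mul_of_nonneg_left (hC1 ℓ hℓ) hcu
      _ = cu * C1 * (ℓ:ℝ) ^ (-a) := by ring
  have h2 : (∑' k : ℕ, b (k + ℓ)) ≤ K * (1 - r)⁻¹ * C2 * (ℓ:ℝ) ^ (-a) := by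
    have hbk : ∀ k : ℕ, b (k + ℓ) = r ^ k * r ^ ℓ * K := by
      intro k
      rw [hb]
      simp only [if_neg (by omega : ¬ k + ℓ < ℓ)]
      rw [pow_add]
    have : (∑' k : ℕ, b (k + ℓ)) = (1 - r)⁻¹ * r ^ ℓ * K := by
      simp_rw [hbk]
      rw [tsum_mul_right, tsum_mul_right, tsum_geometric_of_lt_one hr0 hr1]
    rw [this]
    have h3 : r ^ ℓ ≤ C2 * (ℓ:ℝ) ^ (-a) := hC2 ℓ hℓ
    have h4 : (0:ℝ) ≤ (1 - r)⁻¹ := by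
      have : (0:ℝ) < 1 - r := by linarith
      positivity
    nlinarith [mul_le_mul_of_nonneg_left h3 (mul_nonneg h4 hK)]
  nlinarith [hla]

end Aux


/-- **Lemma (AR(1) processes driven by Bernoulli-shift innovations).**
For the AR(1) recursion `y_t = ρ y_{t-1} + u_t` with `|ρ| < 1`, `E|y₀|⁴ < ∞` and innovations
`{u_t}` forming an `L₄`-decomposable Bernoulli shift with rate `a > 2`:
`|y_t - ȳ_t|₄ ≤ c₁ |ρ|^t`, the coupled version of the stationary solution satisfies
`|ȳ_t - ỹ_{t,ℓ}|₄ ≤ c₂ ℓ^{-a}`, and `{ȳ_t}` is an `L₄`-decomposable Bernoulli shift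
with rate `a`. -/
theorem ar1_bernoulli_shift
    {Ω S : Type} [MeasureSpace Ω] [IsProbabilityMeasure (ℙ : Measure Ω)] [MeasurableSpace S]
    (D : ShiftData Ω S) (hu : (ℕ → S) → ℝ) (a cu ρ : ℝ) (y0 : Ω → ℝ)
    (hmeasu : Measurable hu) (ha : 2 < a) (hcu : 0 < cu) (hρ : |ρ| < 1)
    (hy0meas : Measurable y0)
    (hy0 : Integrable fun ω => |y0 ω| ^ (4 : ℝ))
    (hintu : ∀ t : ℤ, Integrable fun ω => |D.proc hu t ω| ^ (4 : ℝ))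
    (hintu' : ∀ (t : ℤ) (ℓ : ℕ), 1 ≤ ℓ →
      Integrable fun ω => |D.proc hu t ω - D.coup hu t ℓ ω| ^ (4 : ℝ))
    (hcoupu : ∀ (t : ℤ) (ℓ : ℕ), 1 ≤ ℓ →
      lnorm (fun ω => D.proc hu t ω - D.coup hu t ℓ ω) 4 ≤ cu * (ℓ : ℝ) ^ (-a))
    (y : ℕ → Ω → ℝ)
    (hy : ∀ (t : ℕ) (ω : Ω), y t ω = ρ ^ t * y0 ω +
      ∑ j ∈ Finset.range t, ρ ^ j * D.proc hu ((t : ℤ) - (j : ℤ)) ω)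
    (ybar : ℤ → Ω → ℝ)
    (hybar : ∀ (t : ℤ) (ω : Ω), ybar t ω = ∑' j : ℕ, ρ ^ j * D.proc hu (t - (j : ℤ)) ω)
    (hy' : (ℕ → S) → ℝ)
    (hhy : ∀ s : ℕ → S, hy' s = ∑' j : ℕ, ρ ^ j * hu fun n => s (n + j)) :
    (∃ c₁ : ℝ, 0 ≤ c₁ ∧ ∀ t : ℕ, 1 ≤ t →
      lnorm (fun ω => y t ω - ybar (t : ℤ) ω) 4 ≤ c₁ * |ρ| ^ t) ∧
    (∃ c₂ : ℝ, 0 ≤ c₂ ∧ ∀ (t : ℤ) (ℓ : ℕ), 1 ≤ ℓ →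
      lnorm (fun ω => ybar t ω - D.coup hy' t ℓ ω) 4 ≤ c₂ * (ℓ : ℝ) ^ (-a)) ∧
    IsBernoulliShift ybar 4 a := by
  classical
  set r := |ρ| with hrdef
  have hr0 : 0 ≤ r := abs_nonneg ρ
  have hmeas_proc : ∀ t : ℤ, Measurable (D.proc hu t) := fun t =>
    hmeasu.comp (measurable_pi_lambda _ fun n => D.meas_η _)
  have hmeas_coup : ∀ (t : ℤ) (ℓ : ℕ), Measurable (D.coup hu t ℓ) := by
    intro t ℓ
    refine hmeasu.comp (measurable_pi_lambda _ fun n => ?_)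
    by_cases h : n < ℓ
    · simp only [if_pos h]; exact D.meas_η _
    · simp only [if_neg h]; exact D.meas_ηc _ _ _
  have hinj_inl : ∀ t : ℤ, Function.Injective fun n : ℕ => (Sum.inl (t - n) : ℤ ⊕ ℤ × ℤ × ℕ) := by
    intro t n m h
    simp only [Sum.inl.injEq, sub_right_inj, Nat.cast_inj] at h
    exact h
  have hproc_eq : ∀ t : ℤ, D.proc hu t = fun ω => hu fun n => D.X (Sum.inl (t - n)) ω :=
    fun t => rfl
  have hu_id : ∀ t : ℤ, IdentDistrib (D.proc hu t) (D.proc hu 0) ℙ ℙ := by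
    intro t
    rw [hproc_eq t, hproc_eq 0]
    exact D.identDistrib_comp _ _ (hinj_inl t) (hinj_inl 0) hmeasu
  have hmem_u : ∀ t : ℤ, MemLp (D.proc hu t) 4 ℙ := fun t =>
    memLp_four_of_integrable (hmeas_proc t).aestronglyMeasurable (hintu t)
  set Ke := eLpNorm (D.proc hu 0) 4 ℙ with hKedef
  set K := Ke.toReal with hKdef
  have hKe_ne : Ke ≠ ∞ := (hmem_u 0).eLpNorm_ne_top
  have hKe : Ke = ENNReal.ofReal K := (ENNReal.ofReal_toReal hKe_ne).symm
  have hK0 : 0 ≤ K := ENNReal.toReal_nonneg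
  have hu_eLp : ∀ t : ℤ, eLpNorm (D.proc hu t) 4 ℙ = Ke := fun t => (hu_id t).eLpNorm_eq 4
  have habs : ∀ x : ℝ, (‖x‖₊ : ℝ≥0∞) ≤ 1 + ENNReal.ofReal (|x| ^ (4:ℝ)) := by
    intro x
    rw [← enorm_eq_nnnorm, ← ofReal_norm, Real.norm_eq_abs]
    rcases le_total (|x|) 1 with h | h
    · calc ENNReal.ofReal |x| ≤ ENNReal.ofReal 1 := ENNReal.ofReal_le_ofReal h
        _ ≤ 1 + ENNReal.ofReal (|x| ^ (4:ℝ)) := by simp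
    · have h2 : |x| ≤ |x| ^ (4:ℝ) := by
        calc |x| = |x| ^ (1:ℝ) := (Real.rpow_one _).symm
          _ ≤ |x| ^ (4:ℝ) := Real.rpow_le_rpow_of_exponent_le h (by norm_num)
      calc ENNReal.ofReal |x| ≤ ENNReal.ofReal (|x| ^ (4:ℝ)) := ENNReal.ofReal_le_ofReal h2
        _ ≤ 1 + ENNReal.ofReal (|x| ^ (4:ℝ)) := le_add_self
  have hlint4 : (∫⁻ ω, ENNReal.ofReal (|D.proc hu 0 ω| ^ (4:ℝ)) ∂ℙ) < ∞ := by
    rw [← hasFiniteIntegral_iff_ofReal (Filter.Eventually.of_forall fun ω =>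
      Real.rpow_nonneg (abs_nonneg _) _)]
    exact (hintu 0).hasFiniteIntegral
  set c1m := ∫⁻ ω, (‖D.proc hu 0 ω‖₊ : ℝ≥0∞) ∂ℙ with hc1mdef
  have hc1m : c1m < ∞ := by
    calc c1m ≤ ∫⁻ ω, (1 + ENNReal.ofReal (|D.proc hu 0 ω| ^ (4:ℝ))) ∂ℙ :=
          lintegral_mono fun ω => habs _
      _ = 1 + ∫⁻ ω, ENNReal.ofReal (|D.proc hu 0 ω| ^ (4:ℝ)) ∂ℙ := by
          rw [lintegral_add_left measurable_const]
          simp [measure_univ]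
      _ < ∞ := ENNReal.add_lt_top.2 ⟨ENNReal.one_lt_top, hlint4⟩
  have hmom_transfer : ∀ {V : Ω → ℝ}, IdentDistrib V (D.proc hu 0) ℙ ℙ →
      (∫⁻ ω, (‖V ω‖₊ : ℝ≥0∞) ∂ℙ) = c1m := fun hV =>
    (hV.comp measurable_nnnorm.coe_nnreal_ennreal).lintegral_eq
  have hterm_meas : ∀ (t : ℤ) (j : ℕ), Measurable fun ω => ρ ^ j * D.proc hu (t - j) ω :=
    fun t j => (hmeas_proc (t - j)).const_mul _
  have hnnr : ∀ j : ℕ, ((‖ρ ^ j‖₊ : ℝ≥0∞)) = ENNReal.ofReal (r ^ j) := by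
    intro j
    rw [← enorm_eq_nnnorm, ← ofReal_norm, Real.norm_eq_abs, abs_pow]
  have haelint : ∀ (j : ℕ) (V : Ω → ℝ), Measurable V →
      IdentDistrib V (D.proc hu 0) ℙ ℙ →
      (∫⁻ ω, (‖ρ ^ j * V ω‖₊ : ℝ≥0∞) ∂ℙ) ≤ ENNReal.ofReal (r ^ j) * c1m := by
    intro j V hVm hV
    have hnnj : (fun ω => (‖ρ ^ j * V ω‖₊ : ℝ≥0∞))
        = fun ω => (‖ρ ^ j‖₊ : ℝ≥0∞) * (‖V ω‖₊ : ℝ≥0∞) := by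
      funext ω; rw [nnnorm_mul]; push_cast; ring
    rw [hnnj, lintegral_const_mul _ hVm.nnnorm.coe_nnreal_ennreal, hnnr j,
      hmom_transfer hV]
  have haeU : ∀ t : ℤ, ∀ᵐ ω ∂(ℙ : Measure Ω),
      Summable fun j : ℕ => ρ ^ j * D.proc hu (t - j) ω := by
    intro t
    exact ae_summable_of_lintegral_bound
      (fun j => (hterm_meas t j).aemeasurable) c1m hc1m.ne r hr0 hρ
      (fun j => haelint j _ (hmeas_proc _) (hu_id _))
  have hmeas_ybar : ∀ t : ℤ, Measurable (ybar t) := by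
    intro t
    have heq : ybar t = fun ω => ∑' j : ℕ, ρ ^ j * D.proc hu (t - j) ω := funext (hybar t)
    rw [heq]
    exact measurable_tsum_real fun j => hterm_meas t j
  have hmeas_hy' : Measurable hy' := by
    have heq : hy' = fun s => ∑' j : ℕ, ρ ^ j * hu fun n => s (n + j) := funext hhy
    rw [heq]
    exact measurable_tsum_real fun j =>
      (hmeasu.comp (measurable_pi_lambda _ fun n => measurable_pi_apply _)).const_mul _
  have hmeas_coup_hy' : ∀ (t : ℤ) (ℓ : ℕ), Measurable (D.coup hy' t ℓ) := by
    intro t ℓ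
    refine hmeas_hy'.comp (measurable_pi_lambda _ fun n => ?_)
    by_cases h : n < ℓ
    · simp only [if_pos h]; exact D.meas_η _
    · simp only [if_neg h]; exact D.meas_ηc _ _ _
  obtain ⟨C, hCpos, hC⟩ := exists_total_bound r a cu (2 * K) hr0 hρ ha hcu.le (by linarith)
  have key : ∀ (t : ℤ) (ℓ : ℕ), 1 ≤ ℓ →
      MemLp (fun ω => ybar t ω - D.coup hy' t ℓ ω) 4 ℙ ∧
      eLpNorm (fun ω => ybar t ω - D.coup hy' t ℓ ω) 4 ℙ
        ≤ ENNReal.ofReal (C * (ℓ:ℝ) ^ (-a)) := by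
    intro t ℓ hℓ
    set Z : ℕ → Ω → ℝ := fun j ω =>
      hu fun n => if n + j < ℓ then D.η (t - j - n) ω else D.ηc (t - j - n) t ℓ ω with hZdef
    have hZmeas : ∀ j, Measurable (Z j) := by
      intro j
      refine hmeasu.comp (measurable_pi_lambda _ fun n => ?_)
      by_cases h : n + j < ℓ
      · simp only [if_pos h]; exact D.meas_η _
      · simp only [if_neg h]; exact D.meas_ηc _ _ _
    have hcoup_repr : ∀ ω, D.coup hy' t ℓ ω = ∑' j : ℕ, ρ ^ j * Z j ω := by
      intro ω
      show hy' (fun n => if n < ℓ then D.η (t - n) ω else D.ηc (t - n) t ℓ ω)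
        = ∑' j : ℕ, ρ ^ j * Z j ω
      rw [hhy]
      congr 1
      funext j
      congr 1
      congr 1
      funext n
      have harg : t - ((n + j : ℕ) : ℤ) = t - j - n := by push_cast; ring
      by_cases h : n + j < ℓ
      · rw [if_pos h, if_pos h, harg]
      · rw [if_neg h, if_neg h, harg]
    have hZid : ∀ j, IdentDistrib (Z j) (D.proc hu 0) ℙ ℙ := by
      intro j
      have hrepr : Z j = fun ω => hu fun n =>
          D.X (if n + j < ℓ then (Sum.inl (t - j - n) : ℤ ⊕ ℤ × ℤ × ℕ)
               else Sum.inr (t - j - n, t, ℓ)) ω := by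
        funext ω
        simp only [hZdef]
        congr 1
        funext n
        by_cases h : n + j < ℓ
        · rw [if_pos h, if_pos h]; rfl
        · rw [if_neg h, if_neg h]; rfl
      have hfinj : Function.Injective fun n : ℕ =>
          (if n + j < ℓ then (Sum.inl (t - j - n) : ℤ ⊕ ℤ × ℤ × ℕ)
           else Sum.inr (t - j - n, t, ℓ)) := by
        intro n m h
        simp only [] at h
        by_cases hn : n + j < ℓ <;> by_cases hm : m + j < ℓ
        · rw [if_pos hn, if_pos hm, Sum.inl.injEq] at h
          omega
        · rw [if_pos hn, if_neg hm] at h; exact absurd h (by simp)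
        · rw [if_neg hn, if_pos hm] at h; exact absurd h (by simp)
        · rw [if_neg hn, if_neg hm, Sum.inr.injEq, Prod.mk.injEq] at h
          obtain ⟨h1, -⟩ := h
          omega
      rw [hrepr, hproc_eq 0]
      exact D.identDistrib_comp _ _ hfinj (hinj_inl 0) hmeasu
    have hbj : ∀ j : ℕ, eLpNorm (fun ω => D.proc hu (t - j) ω - Z j ω) 4 ℙ
        ≤ ENNReal.ofReal (if j < ℓ then cu * ((ℓ - j : ℕ):ℝ) ^ (-a) else 2 * K) := by
      intro j
      by_cases hj : j < ℓ
      · rw [if_pos hj]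
        set Ψ : ((ℕ ⊕ ℕ) → S) → ℝ := fun v =>
          hu (fun n => v (Sum.inl n)) -
            hu (fun n => if n < ℓ - j then v (Sum.inl n) else v (Sum.inr n)) with hΨdef
        have hΨmeas : Measurable Ψ := by
          refine Measurable.sub ?_ ?_
          · exact hmeasu.comp (measurable_pi_lambda _ fun n => measurable_pi_apply _)
          · refine hmeasu.comp (measurable_pi_lambda _ fun n => ?_)
            by_cases h : n < ℓ - j
            · simp only [if_pos h]; exact measurable_pi_apply _
            · simp only [if_neg h]; exact measurable_pi_apply _
        set f : ℕ ⊕ ℕ → ℤ ⊕ ℤ × ℤ × ℕ :=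
          Sum.elim (fun n => Sum.inl (t - j - n)) (fun n => Sum.inr (t - j - n, t, ℓ)) with hfdef
        set g : ℕ ⊕ ℕ → ℤ ⊕ ℤ × ℤ × ℕ :=
          Sum.elim (fun n => Sum.inl (t - j - n))
            (fun n => Sum.inr (t - j - n, t - j, ℓ - j)) with hgdef
        have hfinj : Function.Injective f := by
          intro x y h
          simp only [hfdef] at h
          cases x <;> cases y <;> simp only [Sum.elim_inl, Sum.elim_inr] at h
          · rw [Sum.inl.injEq] at h
            rw [Sum.inl.injEq]
            omega
          · exact absurd h (by simp)
          · exact absurd h (by simp)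
          · rw [Sum.inr.injEq, Prod.mk.injEq] at h
            obtain ⟨h1, -⟩ := h
            rw [Sum.inr.injEq]
            omega
        have hginj : Function.Injective g := by
          intro x y h
          simp only [hgdef] at h
          cases x <;> cases y <;> simp only [Sum.elim_inl, Sum.elim_inr] at h
          · rw [Sum.inl.injEq] at h
            rw [Sum.inl.injEq]
            omega
          · exact absurd h (by simp)
          · exact absurd h (by simp)
          · rw [Sum.inr.injEq, Prod.mk.injEq] at h
            obtain ⟨h1, -⟩ := h
            rw [Sum.inr.injEq]
            omega
        have hid := D.identDistrib_comp f g hfinj hginj hΨmeas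
        have hleft : (fun ω => Ψ fun i => D.X (f i) ω)
            = fun ω => D.proc hu (t - j) ω - Z j ω := by
          funext ω
          simp only [hΨdef]
          congr 1
          simp only [hZdef]
          congr 1
          funext n
          by_cases h : n + j < ℓ
          · rw [if_pos (show n < ℓ - j by omega), if_pos h]; rfl
          · rw [if_neg (show ¬ n < ℓ - j by omega), if_neg h]; rfl
        have hright : (fun ω => Ψ fun i => D.X (g i) ω)
            = fun ω => D.proc hu (t - j) ω - D.coup hu (t - j) (ℓ - j) ω := by
          funext ω
          rfl
        have hℓj : 1 ≤ ℓ - j := by omega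
        have hmemr : MemLp (fun ω => D.proc hu (t - j) ω - D.coup hu (t - j) (ℓ - j) ω) 4 ℙ :=
          memLp_four_of_integrable ((hmeas_proc _).sub (hmeas_coup _ _)).aestronglyMeasurable
            (hintu' (t - j) (ℓ - j) hℓj)
        rw [hleft, hright] at hid
        rw [hid.eLpNorm_eq, eLpNorm_eq_ofReal_lnorm hmemr]
        exact ENNReal.ofReal_le_ofReal (hcoupu (t - j) (ℓ - j) hℓj)
      · rw [if_neg hj]
        have hZj : Z j = fun ω => hu fun n => D.X (Sum.inr (t - j - n, t, ℓ)) ω := by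
          funext ω
          simp only [hZdef]
          congr 1
          funext n
          rw [if_neg (by omega)]
          rfl
        have hinr_inj : Function.Injective fun n : ℕ =>
            (Sum.inr (t - j - n, t, ℓ) : ℤ ⊕ ℤ × ℤ × ℕ) := by
          intro n m h
          rw [Sum.inr.injEq, Prod.mk.injEq] at h
          obtain ⟨h1, -⟩ := h
          omega
        have hZid0 : IdentDistrib (Z j) (D.proc hu 0) ℙ ℙ := by
          rw [hZj, hproc_eq 0]
          exact D.identDistrib_comp _ _ hinr_inj (hinj_inl 0) hmeasu
        calc eLpNorm (fun ω => D.proc hu (t - j) ω - Z j ω) 4 ℙ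
            ≤ eLpNorm (D.proc hu (t - j)) 4 ℙ + eLpNorm (Z j) 4 ℙ :=
              eLpNorm_sub_le (hmeas_proc _).aestronglyMeasurable
                (hZmeas j).aestronglyMeasurable (by norm_num)
          _ = Ke + Ke := by rw [hu_eLp, hZid0.eLpNorm_eq, ← hKedef]
          _ = ENNReal.ofReal (2 * K) := by
              rw [hKe, ← ENNReal.ofReal_add hK0 hK0]
              congr 1
              ring
    have haeZ : ∀ᵐ ω ∂(ℙ : Measure Ω), Summable fun j : ℕ => ρ ^ j * Z j ω :=
      ae_summable_of_lintegral_bound (fun j => ((hZmeas j).const_mul _).aemeasurable)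
        c1m hc1m.ne r hr0 hρ (fun j => haelint j _ (hZmeas j) (hZid j))
    have hdiff_ae : (fun ω => ybar t ω - D.coup hy' t ℓ ω)
        =ᵐ[(ℙ : Measure Ω)] fun ω =>
          ∑' j : ℕ, (ρ ^ j * D.proc hu (t - j) ω - ρ ^ j * Z j ω) := by
      filter_upwards [haeU t, haeZ] with ω h1 h2
      rw [hybar t ω, hcoup_repr ω]
      exact (Summable.tsum_sub h1 h2).symm
    have hbnn : ∀ j : ℕ, 0 ≤ r ^ j * (if j < ℓ then cu * ((ℓ - j : ℕ):ℝ) ^ (-a) else 2 * K) := by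
      intro j
      refine mul_nonneg (pow_nonneg hr0 j) ?_
      split_ifs
      · exact mul_nonneg hcu.le (Real.rpow_nonneg (Nat.cast_nonneg _) _)
      · linarith
    obtain ⟨hsumb, hsumle⟩ := hC ℓ hℓ
    have hterm_le : ∀ j : ℕ,
        eLpNorm (fun ω => ρ ^ j * D.proc hu (t - j) ω - ρ ^ j * Z j ω) 4 ℙ
        ≤ ENNReal.ofReal (r ^ j * (if j < ℓ then cu * ((ℓ - j : ℕ):ℝ) ^ (-a) else 2 * K)) := by
      intro j
      have hsmul : (fun ω => ρ ^ j * D.proc hu (t - j) ω - ρ ^ j * Z j ω)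
          = (ρ ^ j) • fun ω => D.proc hu (t - j) ω - Z j ω := by
        funext ω
        simp only [Pi.smul_apply, smul_eq_mul]
        ring
      rw [hsmul, eLpNorm_const_smul, enorm_eq_nnnorm, hnnr j]
      calc ENNReal.ofReal (r ^ j) * eLpNorm (fun ω => D.proc hu (t - j) ω - Z j ω) 4 ℙ
          ≤ ENNReal.ofReal (r ^ j)
            * ENNReal.ofReal (if j < ℓ then cu * ((ℓ - j : ℕ):ℝ) ^ (-a) else 2 * K) :=
            mul_le_mul_right (hbj j) _
        _ = _ := by rw [← ENNReal.ofReal_mul (pow_nonneg hr0 j)]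
    have htsum_le :
        eLpNorm (fun ω => ∑' j : ℕ, (ρ ^ j * D.proc hu (t - j) ω - ρ ^ j * Z j ω)) 4 ℙ
        ≤ ENNReal.ofReal (C * (ℓ:ℝ) ^ (-a)) := by
      calc eLpNorm (fun ω => ∑' j : ℕ, (ρ ^ j * D.proc hu (t - j) ω - ρ ^ j * Z j ω)) 4 ℙ
          ≤ ∑' j : ℕ, eLpNorm (fun ω => ρ ^ j * D.proc hu (t - j) ω - ρ ^ j * Z j ω) 4 ℙ :=
            eLpNorm_tsum_le fun j => (hterm_meas t j).sub ((hZmeas j).const_mul _)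
        _ ≤ ∑' j : ℕ, ENNReal.ofReal
              (r ^ j * (if j < ℓ then cu * ((ℓ - j : ℕ):ℝ) ^ (-a) else 2 * K)) :=
            ENNReal.tsum_le_tsum hterm_le
        _ = ENNReal.ofReal
              (∑' j : ℕ, r ^ j * (if j < ℓ then cu * ((ℓ - j : ℕ):ℝ) ^ (-a) else 2 * K)) :=
            (ENNReal.ofReal_tsum_of_nonneg hbnn hsumb).symm
        _ ≤ _ := ENNReal.ofReal_le_ofReal hsumle
    have hfinal : eLpNorm (fun ω => ybar t ω - D.coup hy' t ℓ ω) 4 ℙ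
        ≤ ENNReal.ofReal (C * (ℓ:ℝ) ^ (-a)) := by
      rw [eLpNorm_congr_ae hdiff_ae]
      exact htsum_le
    exact ⟨⟨((hmeas_ybar t).sub (hmeas_coup_hy' t ℓ)).aestronglyMeasurable,
      lt_of_le_of_lt hfinal ENNReal.ofReal_lt_top⟩, hfinal⟩
  have hmem_ybar : ∀ t : ℤ, MemLp (ybar t) 4 ℙ := by
    intro t
    refine ⟨(hmeas_ybar t).aestronglyMeasurable, ?_⟩
    have heq : ybar t = fun ω => ∑' j : ℕ, ρ ^ j * D.proc hu (t - j) ω := funext (hybar t)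
    rw [heq]
    calc eLpNorm (fun ω => ∑' j : ℕ, ρ ^ j * D.proc hu (t - j) ω) 4 ℙ
        ≤ ∑' j : ℕ, eLpNorm (fun ω => ρ ^ j * D.proc hu (t - j) ω) 4 ℙ :=
          eLpNorm_tsum_le fun j => hterm_meas t j
      _ = ∑' j : ℕ, ENNReal.ofReal (r ^ j) * Ke := by
          congr 1
          funext j
          have hsm : (fun ω => ρ ^ j * D.proc hu (t - j) ω) = (ρ ^ j) • D.proc hu (t - j) := by
            funext ω
            simp [smul_eq_mul]
          rw [hsm, eLpNorm_const_smul, enorm_eq_nnnorm, hnnr j, hu_eLp]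
      _ = (∑' j : ℕ, ENNReal.ofReal (r ^ j)) * Ke := ENNReal.tsum_mul_right
      _ < ∞ := by
          refine ENNReal.mul_lt_top ?_ hKe_ne.lt_top
          rw [← ENNReal.ofReal_tsum_of_nonneg (fun j => pow_nonneg hr0 j)
            (summable_geometric_of_lt_one hr0 hρ)]
          exact ENNReal.ofReal_lt_top
  have hint_ybar : ∀ t : ℤ, Integrable fun ω => |ybar t ω| ^ (4:ℝ) := by
    intro t
    have h := (hmem_ybar t).integrable_norm_rpow (by norm_num) (by norm_num)
    simpa [Real.norm_eq_abs] using h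
  have hconj2 : ∀ (t : ℤ) (ℓ : ℕ), 1 ≤ ℓ →
      (Integrable fun ω => |ybar t ω - D.coup hy' t ℓ ω| ^ (4:ℝ)) ∧
      lnorm (fun ω => ybar t ω - D.coup hy' t ℓ ω) 4 ≤ C * (ℓ:ℝ) ^ (-a) := by
    intro t ℓ hℓ
    obtain ⟨hmem, hbd⟩ := key t ℓ hℓ
    constructor
    · have h := hmem.integrable_norm_rpow (by norm_num) (by norm_num)
      simpa [Real.norm_eq_abs] using h
    · exact lnorm_le_of_eLpNorm_le hmem
        (mul_nonneg hCpos.le (Real.rpow_nonneg (Nat.cast_nonneg _) _)) hbd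
  refine ⟨?_, ⟨C, hCpos.le, fun t ℓ hℓ => (hconj2 t ℓ hℓ).2⟩, ?_⟩
  · -- first conjunct
    refine ⟨(∫ ω, |y0 ω - ybar 0 ω| ^ (4:ℝ)) ^ ((1:ℝ)/4),
      Real.rpow_nonneg (integral_nonneg fun ω => Real.rpow_nonneg (abs_nonneg _) _) _,
      fun t ht => ?_⟩
    have hae : ∀ᵐ ω ∂(ℙ : Measure Ω),
        y t ω - ybar (t:ℤ) ω = ρ ^ t * (y0 ω - ybar 0 ω) := by
      filter_upwards [haeU (t:ℤ)] with ω hs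
      have h1 : ybar (t:ℤ) ω
          = (∑ j ∈ Finset.range t, ρ ^ j * D.proc hu ((t:ℤ) - (j:ℤ)) ω)
            + ρ ^ t * ybar 0 ω := by
        rw [hybar (t:ℤ) ω, ← Summable.sum_add_tsum_nat_add t hs]
        congr 1
        rw [hybar 0 ω, ← tsum_mul_left]
        congr 1
        funext k
        have harg : (t:ℤ) - ((k + t : ℕ) : ℤ) = (0:ℤ) - (k:ℤ) := by push_cast; ring
        rw [pow_add, harg]
        ring
      rw [hy t ω, h1]
      ring
    have hInn : 0 ≤ ∫ ω, |y0 ω - ybar 0 ω| ^ (4:ℝ) :=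
      integral_nonneg fun ω => Real.rpow_nonneg (abs_nonneg _) _
    have hint_eq : (∫ ω, |y t ω - ybar (t:ℤ) ω| ^ (4:ℝ))
        = (r ^ t) ^ (4:ℝ) * ∫ ω, |y0 ω - ybar 0 ω| ^ (4:ℝ) := by
      calc (∫ ω, |y t ω - ybar (t:ℤ) ω| ^ (4:ℝ))
          = ∫ ω, (r ^ t) ^ (4:ℝ) * |y0 ω - ybar 0 ω| ^ (4:ℝ) := by
            refine integral_congr_ae ?_
            filter_upwards [hae] with ω h
            rw [h, abs_mul, abs_pow,
              Real.mul_rpow (pow_nonneg hr0 t) (abs_nonneg _)]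
        _ = _ := integral_const_mul _ _
    show (∫ ω, |y t ω - ybar (t:ℤ) ω| ^ (4:ℝ)) ^ ((1:ℝ)/4)
        ≤ (∫ ω, |y0 ω - ybar 0 ω| ^ (4:ℝ)) ^ ((1:ℝ)/4) * r ^ t
    rw [hint_eq, Real.mul_rpow (Real.rpow_nonneg (pow_nonneg hr0 t) _) hInn]
    have hpow : ((r ^ t) ^ (4:ℝ)) ^ ((1:ℝ)/4) = r ^ t := by
      rw [← Real.rpow_mul (pow_nonneg hr0 t)]
      norm_num
    rw [hpow, mul_comm]
  · -- third conjunct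
    refine ⟨S, inferInstance, D, hy', max C 1, hmeas_hy',
      lt_of_lt_of_le zero_lt_one (le_max_right _ _), ?_, hint_ybar, ?_⟩
    · intro t ω
      show ybar t ω = hy' fun n => D.η (t - n) ω
      rw [hhy, hybar t ω]
      congr 1
      funext j
      congr 1
      show D.proc hu (t - j) ω = hu fun n => D.η (t - ((n + j : ℕ) : ℤ)) ω
      show (hu fun n => D.η (t - (j:ℤ) - (n:ℤ)) ω) = hu fun n => D.η (t - ((n + j : ℕ) : ℤ)) ω
      congr 1
      funext n
      congr 1
      push_cast
      ring
    · intro t ℓ hℓ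
      obtain ⟨hi, hb⟩ := hconj2 t ℓ hℓ
      exact ⟨hi, hb.trans (mul_le_mul_of_nonneg_right (le_max_left _ _)
        (Real.rpow_nonneg (Nat.cast_nonneg _) _))⟩


end OnlineCPD
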